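/- arXiv:1605.09450 — 5 statements merged into one kernel-verified Lean document; each statement's English description precedes it below -/
import Mathlib

section
/- Let f : [0,1] → [0,1] be a strictly increasing function, and suppose there exists p̃ ∈ (0,1) such that ∑_n (1 − f^n(p̃)) < ∞, where f^n denotes the n-fold iterate of f (with f^0 the identity). Then there exists ε with 0 < ε < 1 such that for every p ∈ [p̃, 1) one has ∏_n f^n(p) > ε; that is, ε does not depend on the choice of p ∈ [p̃,1). -/
open Filter Finset

private lemma weier (a : ℕ → ℝ) (s : Finset ℕ) (h : ∀ k ∈ s, 0 ≤ a k ∧ a k ≤ 1) :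
    1 - ∑ k ∈ s, (1 - a k) ≤ ∏ k ∈ s, a k := by
  induction s using Finset.cons_induction with
  | empty => simp
  | cons i s hi ih =>
    rw [Finset.prod_cons, Finset.sum_cons]
    have h1 := h i (Finset.mem_cons_self i s)
    have h2 : ∀ k ∈ s, 0 ≤ a k ∧ a k ≤ 1 := fun k hk => h k (Finset.mem_cons_of_mem hk)
    have ih' := ih h2
    have hs : 0 ≤ ∑ k ∈ s, (1 - a k) :=
      Finset.sum_nonneg fun k hk => by linarith [(h2 k hk).2]
    have hp : 0 ≤ ∏ k ∈ s, a k := Finset.prod_nonneg fun k hk => (h2 k hk).1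
    nlinarith [h1.1, h1.2]

/-- Let `f : [0,1] → [0,1]` be strictly increasing with `∑ (1 - f^[n] p̃) < ∞` for some
`p̃ ∈ (0,1)`. Then there is `ε ∈ (0,1)`, independent of `p`, such that for every
`p ∈ [p̃,1)` the infinite product `∏ f^[n] p` (limit of the partial products) exceeds `ε`. -/
theorem stmt4 (f : ℝ → ℝ) (hmap : Set.MapsTo f (Set.Icc 0 1) (Set.Icc 0 1))
    (hmono : StrictMonoOn f (Set.Icc 0 1))
    (ptilde : ℝ) (hpt : ptilde ∈ Set.Ioo (0 : ℝ) 1)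
    (hsum : Summable (fun n => 1 - f^[n] ptilde)) :
    ∃ ε : ℝ, 0 < ε ∧ ε < 1 ∧ ∀ p ∈ Set.Ico ptilde 1, ∀ L : ℝ,
      Tendsto (fun n => ∏ k ∈ Finset.range n, f^[k] p) atTop (nhds L) → ε < L := by
  set a : ℕ → ℝ := fun n => f^[n] ptilde with ha
  have hptIcc : ptilde ∈ Set.Icc (0 : ℝ) 1 := ⟨hpt.1.le, hpt.2.le⟩
  have h0Icc : (0 : ℝ) ∈ Set.Icc (0 : ℝ) 1 := by constructor <;> norm_num
  have ha01 : ∀ n, a n ∈ Set.Icc (0 : ℝ) 1 := fun n => hmap.iterate n hptIcc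
  have hasucc : ∀ n, a (n + 1) = f (a n) := fun n => Function.iterate_succ_apply' f n ptilde
  -- positivity of a n
  have hapos : ∀ n, 0 < a n := by
    intro n
    induction n with
    | zero => exact hpt.1
    | succ n ih =>
      have hlt : f 0 < f (a n) := hmono h0Icc (ha01 n) ih
      have hf0 : 0 ≤ f 0 := (hmap h0Icc).1
      rw [hasucc n]; linarith
  -- monotone comparison: for p ∈ [ptilde, 1), a k ≤ f^[k] p and f^[k] p ∈ [0,1]
  have hcomp : ∀ p ∈ Set.Ico ptilde 1, ∀ k,
      f^[k] p ∈ Set.Icc (0 : ℝ) 1 ∧ a k ≤ f^[k] p := by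
    intro p hp k
    have hpIcc : p ∈ Set.Icc (0 : ℝ) 1 := ⟨le_trans hpt.1.le hp.1, hp.2.le⟩
    induction k with
    | zero => exact ⟨hpIcc, hp.1⟩
    | succ k ih =>
      have hmem : f^[k + 1] p ∈ Set.Icc (0 : ℝ) 1 := hmap.iterate (k + 1) hpIcc
      refine ⟨hmem, ?_⟩
      rw [hasucc k, Function.iterate_succ_apply']
      exact (hmono.monotoneOn (ha01 k) ih.1) ih.2
  -- choose N with the tail sum < 1/2
  have hnn : ∀ n, 0 ≤ 1 - a n := fun n => by linarith [(ha01 n).2]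
  set S : ℝ := ∑' n, (1 - a n) with hS
  have htend : Tendsto (fun n => ∑ k ∈ Finset.range n, (1 - a k)) atTop (nhds S) :=
    hsum.hasSum.tendsto_sum_nat
  have hev : ∀ᶠ n in atTop, S - 1/2 < ∑ k ∈ Finset.range n, (1 - a k) :=
    htend.eventually (eventually_gt_nhds (by linarith))
  obtain ⟨N, hN⟩ := hev.exists
  have htail : ∀ n, N ≤ n → ∑ k ∈ Finset.Ico N n, (1 - a k) < 1/2 := by
    intro n hn
    have h1 : ∑ k ∈ Finset.range n, (1 - a k) ≤ S :=
      Summable.sum_le_tsum _ (fun k _ => hnn k) hsum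
    have h2 : ∑ k ∈ Finset.Ico N n, (1 - a k)
        = ∑ k ∈ Finset.range n, (1 - a k) - ∑ k ∈ Finset.range N, (1 - a k) :=
      Finset.sum_Ico_eq_sub _ hn
    rw [h2]; linarith
  set c : ℝ := ∏ k ∈ Finset.range N, a k with hc
  have hcpos : 0 < c := Finset.prod_pos fun k _ => hapos k
  have hcle : c ≤ 1 :=
    Finset.prod_le_one (fun k _ => (hapos k).le) (fun k _ => (ha01 k).2)
  refine ⟨c / 4, by positivity, by linarith, ?_⟩
  intro p hp L hL
  have key : ∀ n, N ≤ n → c / 2 ≤ ∏ k ∈ Finset.range n, f^[k] p := by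
    intro n hn
    have h1 : ∏ k ∈ Finset.range n, a k ≤ ∏ k ∈ Finset.range n, f^[k] p :=
      Finset.prod_le_prod (fun k _ => (hapos k).le) (fun k _ => (hcomp p hp k).2)
    have h2 : ∏ k ∈ Finset.range n, a k
        = c * ∏ k ∈ Finset.Ico N n, a k := by
      rw [hc, Finset.prod_range_mul_prod_Ico a hn]
    have h3 : 1 - ∑ k ∈ Finset.Ico N n, (1 - a k) ≤ ∏ k ∈ Finset.Ico N n, a k :=
      weier a _ (fun k _ => ⟨(hapos k).le, (ha01 k).2⟩)
    have h4 := htail n hn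
    have h5 : (1 : ℝ) / 2 ≤ ∏ k ∈ Finset.Ico N n, a k := by linarith
    calc c / 2 = c * (1/2) := by ring
      _ ≤ c * ∏ k ∈ Finset.Ico N n, a k := by
          exact mul_le_mul_of_nonneg_left h5 hcpos.le
      _ = ∏ k ∈ Finset.range n, a k := h2.symm
      _ ≤ _ := h1
  have hLge : c / 2 ≤ L :=
    ge_of_tendsto hL (eventually_atTop.2 ⟨N, key⟩)
  linarith
end

section
/- Let (Ω, ℱ, ℙ) be a probability space with a filtration (ℱ_n)_{n∈ℕ}, and let T : Ω → ℕ ∪ {∞} be a stopping time with respect to (ℱ_n). Suppose there exist ε > 0 and N ∈ ℕ, N ≥ 1, such that for every n ∈ ℕ, ℙ(T ≤ n + N ∣ ℱ_n) ≥ ε almost surely (i.e. the conditional expectation of the indicator of {T ≤ n+N} given ℱ_n is ≥ ε almost surely). Then for every k ∈ ℕ, ℙ(T > kN) ≤ (1 − ε)^k. -/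
open MeasureTheory Filter

/-- If `T` is a stopping time (valued in `ℕ ∪ {∞}`) for the filtration `(ℱ n)` and
there are `ε > 0` and `N ≥ 1` with `P(T ≤ n + N ∣ ℱ n) ≥ ε` a.s. for every `n`, then
`P(T > k·N) ≤ (1 - ε)^k` for every `k`. -/
theorem stmt5 {Ω : Type*} {m : MeasurableSpace Ω} (P : Measure Ω) [IsProbabilityMeasure P]
    (ℱ : Filtration ℕ m) (T : Ω → ℕ∞)
    (hT : ∀ n : ℕ, MeasurableSet[ℱ n] {ω | T ω ≤ (n : ℕ∞)})
    (ε : ℝ) (hε : 0 < ε) (N : ℕ) (hN : 1 ≤ N)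
    (hcond : ∀ n : ℕ, ∀ᵐ ω ∂P,
      ε ≤ (P[(Set.indicator {ω' | T ω' ≤ ((n + N : ℕ) : ℕ∞)} (fun _ => (1 : ℝ))) | ℱ n]) ω) :
    ∀ k : ℕ, P {ω | ((k * N : ℕ) : ℕ∞) < T ω} ≤ ENNReal.ofReal ((1 - ε) ^ k) := by
  classical
  have hBmeas : ∀ n : ℕ, MeasurableSet {ω | T ω ≤ (n : ℕ∞)} := fun n => ℱ.le n _ (hT n)
  have hind_le : ∀ n : ℕ, ∀ ω : Ω,
      Set.indicator {ω' | T ω' ≤ (n : ℕ∞)} (fun _ => (1 : ℝ)) ω ≤ 1 := by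
    intro n ω
    by_cases h : ω ∈ {ω' | T ω' ≤ (n : ℕ∞)} <;> simp [Set.indicator, h]
  have hind_int : ∀ n : ℕ,
      Integrable (Set.indicator {ω' | T ω' ≤ (n : ℕ∞)} (fun _ => (1 : ℝ))) P :=
    fun n => (integrable_const 1).indicator (hBmeas n)
  -- ε ≤ 1
  have hε1 : ε ≤ 1 := by
    have h1 : ∀ᵐ ω ∂P,
        (P[(Set.indicator {ω' | T ω' ≤ ((0 + N : ℕ) : ℕ∞)} (fun _ => (1 : ℝ))) | ℱ 0]) ω
          ≤ (P[(fun _ => (1 : ℝ)) | ℱ 0]) ω :=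
      condExp_mono (hind_int (0 + N)) (integrable_const 1)
        (Filter.Eventually.of_forall (hind_le (0 + N)))
    have h2 : (P[(fun _ => (1 : ℝ)) | ℱ 0]) = fun _ => (1 : ℝ) := condExp_const (ℱ.le 0) 1
    haveI := IsProbabilityMeasure.ae_neBot (μ := P)
    obtain ⟨ω, hω1, hω2⟩ := ((hcond 0).and h1).exists
    calc ε ≤ _ := hω1
      _ ≤ _ := hω2
      _ = 1 := by rw [h2]
  have h1ε : 0 ≤ 1 - ε := by linarith
  intro k
  induction k with
  | zero => simpa using (prob_le_one (μ := P))
  | succ k ih =>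
    set n := k * N with hn
    set A := {ω | ((k * N : ℕ) : ℕ∞) < T ω} with hA
    set B := {ω' | T ω' ≤ ((n + N : ℕ) : ℕ∞)} with hB
    have hAeq : A = {ω | T ω ≤ ((k * N : ℕ) : ℕ∞)}ᶜ := by
      ext ω; simp [hA, not_le]
    have hAmF : MeasurableSet[ℱ n] A := by rw [hAeq]; exact (hT (k * N)).compl
    have hAm : MeasurableSet A := ℱ.le n _ hAmF
    have hA1 : {ω | (((k + 1) * N : ℕ) : ℕ∞) < T ω} = A \ B := by
      ext ω
      simp only [hA, hB, Set.mem_setOf_eq, Set.mem_diff, not_le]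
      constructor
      · intro h
        have hle : ((k * N : ℕ) : ℕ∞) ≤ (((k + 1) * N : ℕ) : ℕ∞) := by
          exact_mod_cast Nat.cast_le.mpr (Nat.mul_le_mul_right N (Nat.le_succ k))
        have hle2 : ((n + N : ℕ) : ℕ∞) ≤ (((k + 1) * N : ℕ) : ℕ∞) := by
          have : n + N = (k + 1) * N := by rw [hn]; ring
          rw [this]
        exact ⟨lt_of_le_of_lt hle h, lt_of_le_of_lt hle2 h⟩
      · intro ⟨_, h2⟩
        have : n + N = (k + 1) * N := by rw [hn]; ring
        rwa [this] at h2
    -- the key integral inequality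
    have key : ε * (P A).toReal ≤ (P (A ∩ B)).toReal := by
      have hint1 : ∫ x in A, (fun _ => ε) x ∂P = (P A).toReal * ε := by
        simp [smul_eq_mul, measureReal_def]
      have hmono : ∫ x in A, (fun _ => ε) x ∂P ≤
          ∫ x in A, (P[Set.indicator B (fun _ => (1 : ℝ)) | ℱ n]) x ∂P := by
        apply integral_mono_ae (integrable_const ε).restrict
          (integrable_condExp.restrict)
        exact ae_restrict_of_ae (hcond n)
      have hset : ∫ x in A, (P[Set.indicator B (fun _ => (1 : ℝ)) | ℱ n]) x ∂P
          = ∫ x in A, Set.indicator B (fun _ => (1 : ℝ)) x ∂P :=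
        setIntegral_condExp (ℱ.le n) (hind_int (n + N)) hAmF
      have hindint : ∫ x in A, Set.indicator B (fun _ => (1 : ℝ)) x ∂P
          = (P (A ∩ B)).toReal := by
        rw [setIntegral_indicator (hBmeas (n + N)), integral_const, smul_eq_mul, mul_one,
          measureReal_def, Measure.restrict_apply_univ]
      calc ε * (P A).toReal = (P A).toReal * ε := mul_comm _ _
        _ = ∫ x in A, (fun _ => ε) x ∂P := hint1.symm
        _ ≤ _ := hmono
        _ = (P (A ∩ B)).toReal := by rw [hset, hindint]
    have hsplit : (P (A \ B)).toReal = (P A).toReal - (P (A ∩ B)).toReal := by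
      have := measure_inter_add_diff A (hBmeas (n + N)) (μ := P)
      have h' : (P (A ∩ B)).toReal + (P (A \ B)).toReal = (P A).toReal := by
        rw [← ENNReal.toReal_add (measure_ne_top P _) (measure_ne_top P _), this]
      linarith
    have hIH : (P A).toReal ≤ (1 - ε) ^ k :=
      ENNReal.toReal_le_of_le_ofReal (by positivity) ih
    have hfinal : (P (A \ B)).toReal ≤ (1 - ε) ^ (k + 1) := by
      rw [hsplit]
      have : (P A).toReal - (P (A ∩ B)).toReal ≤ (1 - ε) * (P A).toReal := by
        nlinarith [key]
      calc (P A).toReal - (P (A ∩ B)).toReal ≤ (1 - ε) * (P A).toReal := this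
        _ ≤ (1 - ε) * (1 - ε) ^ k := by nlinarith [hIH, ENNReal.toReal_nonneg (a := P A)]
        _ = (1 - ε) ^ (k + 1) := by ring
    rw [hA1, ← ENNReal.ofReal_toReal (measure_ne_top P (A \ B))]
    exact ENNReal.ofReal_le_ofReal hfinal
end

section
/- Let (Ω, ℱ, ℙ) be a probability space with a filtration (ℱ_n)_{n∈ℕ}, and let T : Ω → ℕ ∪ {∞} be a stopping time with respect to (ℱ_n). Suppose there exist ε > 0 and N ∈ ℕ, N ≥ 1, such that for every n ∈ ℕ, ℙ(T ≤ n + N ∣ ℱ_n) ≥ ε almost surely (i.e. the conditional expectation of the indicator of {T ≤ n+N} given ℱ_n is ≥ ε almost surely). Then T is integrable: E[T] < ∞; in particular T < ∞ almost surely. -/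
open MeasureTheory Filter ENNReal

/-- If `T` is a stopping time (valued in `ℕ ∪ {∞}`) for the filtration `(ℱ n)` and
there are `ε > 0` and `N ≥ 1` with `P(T ≤ n + N ∣ ℱ n) ≥ ε` a.s. for every `n`, then
`T` is integrable: `E[T] < ∞`; in particular `T < ∞` almost surely. -/
theorem stmt6 {Ω : Type*} {m : MeasurableSpace Ω} (P : Measure Ω) [IsProbabilityMeasure P]
    (ℱ : Filtration ℕ m) (T : Ω → ℕ∞)
    (hT : ∀ n : ℕ, MeasurableSet[ℱ n] {ω | T ω ≤ (n : ℕ∞)})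
    (ε : ℝ) (hε : 0 < ε) (N : ℕ) (hN : 1 ≤ N)
    (hcond : ∀ n : ℕ, ∀ᵐ ω ∂P,
      ε ≤ (P[(Set.indicator {ω' | T ω' ≤ ((n + N : ℕ) : ℕ∞)} (fun _ => (1 : ℝ))) | ℱ n]) ω) :
    (∫⁻ ω, ENat.toENNReal (T ω) ∂P) < ⊤ ∧ ∀ᵐ ω ∂P, T ω < ⊤ := by
  set A : ℕ → Set Ω := fun n => {ω | T ω ≤ (n : ℕ∞)} with hA
  set B : ℕ → Set Ω := fun n => (A n)ᶜ with hB
  have hTm : ∀ n : ℕ, MeasurableSet (A n) := fun n => ℱ.le n _ (hT n)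
  have hBm : ∀ n : ℕ, MeasurableSet (B n) := fun n => (hTm n).compl
  have hint : ∀ n : ℕ, Integrable ((A n).indicator fun _ => (1 : ℝ)) P :=
    fun n => (integrable_const (1 : ℝ)).indicator (hTm n)
  -- ε ≤ 1
  have hε1 : ε ≤ 1 := by
    have h1 : ∫ ω, ε ∂P ≤ ∫ ω, (P[(A (0 + N)).indicator (fun _ => (1 : ℝ)) | ℱ 0]) ω ∂P :=
      integral_mono_ae (integrable_const ε) integrable_condExp (hcond 0)
    rw [integral_const, integral_condExp (ℱ.le 0),
      integral_indicator_const _ (hTm (0 + N))] at h1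
    have h2 : (P (A (0 + N))).toReal ≤ 1 := by
      simpa using ENNReal.toReal_mono (by simp) (prob_le_one (μ := P) (s := A (0 + N)))
    simp only [measureReal_def, measure_univ, ENNReal.toReal_one, smul_eq_mul, one_mul, mul_one] at h1
    nlinarith [h1, h2]
  set r : ℝ := 1 - ε with hr
  have hr0 : 0 ≤ r := by linarith
  have hr1 : r < 1 := by linarith
  -- key one-step inequality
  have key : ∀ n : ℕ, (P (B (n + N))).toReal ≤ r * (P (B n)).toReal := by
    intro n
    set f := (A (n + N)).indicator (fun _ => (1 : ℝ)) with hf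
    have h1 : ε * (P (B n)).toReal ≤ ∫ ω in B n, (P[f | ℱ n]) ω ∂P := by
      have := setIntegral_mono_ae (s := B n) (integrable_const ε).integrableOn
        integrable_condExp.integrableOn (hcond n)
      rwa [setIntegral_const, smul_eq_mul, mul_comm] at this
    have h2 : ∫ ω in B n, (P[f | ℱ n]) ω ∂P = (P (B n ∩ A (n + N))).toReal := by
      rw [setIntegral_condExp (ℱ.le n) (hint (n + N)) (hT n).compl,
        setIntegral_indicator (hTm (n + N)), setIntegral_const]
      simp [hB, hA, measureReal_def]
    have hdisj : Disjoint (B (n + N)) (B n ∩ A (n + N)) := by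
      refine Set.disjoint_left.mpr fun ω hω hω' => ?_
      exact hω hω'.2
    have hunion : B n = B (n + N) ∪ (B n ∩ A (n + N)) := by
      ext ω
      simp only [hB, hA, Set.mem_compl_iff, Set.mem_setOf_eq, Set.mem_union, Set.mem_inter_iff]
      have hle : T ω ≤ (n : ℕ∞) → T ω ≤ ((n + N : ℕ) : ℕ∞) := fun h =>
        h.trans (Nat.cast_le.mpr (Nat.le_add_right n N))
      by_cases hc : T ω ≤ ((n + N : ℕ) : ℕ∞) <;> tauto
    have h3 : P (B n) = P (B (n + N)) + P (B n ∩ A (n + N)) := by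
      conv_lhs => rw [hunion]
      exact measure_union hdisj ((hBm n).inter (hTm (n + N)))
    have hfin : ∀ s : Set Ω, P s ≠ ⊤ := fun s => measure_ne_top P s
    have h3' : (P (B n)).toReal = (P (B (n + N))).toReal + (P (B n ∩ A (n + N))).toReal := by
      rw [h3, ENNReal.toReal_add (hfin _) (hfin _)]
    rw [h2] at h1
    have hrp : r * (P (B n)).toReal = (1 - ε) * (P (B n)).toReal := by rw [hr]
    linarith [h1, h3', hrp]
  -- geometric decay
  have geo : ∀ k : ℕ, (P (B (k * N))).toReal ≤ r ^ k := by
    intro k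
    induction k with
    | zero =>
      simpa using ENNReal.toReal_mono (by simp) (prob_le_one (μ := P) (s := B 0))
    | succ k ih =>
      have : (k + 1) * N = k * N + N := by ring
      rw [this, pow_succ, mul_comm (r ^ k) r]
      exact (key (k * N)).trans (mul_le_mul_of_nonneg_left ih hr0)
  set c : ℝ≥0∞ := ENNReal.ofReal r with hc
  have hc1 : c < 1 := by
    rw [hc]
    exact ENNReal.ofReal_lt_one.mpr hr1
  have hPB : ∀ n : ℕ, P (B n) ≤ c ^ (n / N) := by
    intro n
    have hsub : B n ⊆ B (n / N * N) := by
      intro ω hω hle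
      have hle' : T ω ≤ ((n / N * N : ℕ) : ℕ∞) := hle
      exact hω (hle'.trans (Nat.cast_le.mpr (Nat.div_mul_le_self n N)))
    refine (measure_mono hsub).trans ?_
    rw [hc, ← ENNReal.ofReal_pow hr0]
    exact (ENNReal.le_ofReal_iff_toReal_le (measure_ne_top P _) (pow_nonneg hr0 _)).mpr
      (geo (n / N))
  haveI : NeZero N := ⟨by omega⟩
  -- summability of ∑ c^(n/N)
  have hsumfin : ∑' n : ℕ, c ^ (n / N) < ⊤ := by
    have heq : ∑' n : ℕ, c ^ (n / N) = ∑' p : ℕ × Fin N, c ^ ((p.1 * N + (p.2 : ℕ)) / N) := by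
      rw [← Equiv.tsum_eq (Nat.divModEquiv N).symm (fun n => c ^ (n / N))]
      rfl
    have heq2 : ∀ p : ℕ × Fin N, (p.1 * N + (p.2 : ℕ)) / N = p.1 := by
      intro p
      rw [Nat.add_comm, Nat.add_mul_div_right _ _ (Nat.pos_of_ne_zero (NeZero.ne N)),
        Nat.div_eq_of_lt p.2.2, Nat.zero_add]
    rw [heq]
    simp_rw [heq2]
    rw [ENNReal.tsum_prod (f := fun (k : ℕ) (_ : Fin N) => c ^ k)]
    simp_rw [tsum_fintype, Finset.sum_const, Finset.card_univ, Fintype.card_fin, nsmul_eq_mul]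
    rw [ENNReal.tsum_mul_left, ENNReal.tsum_geometric]
    refine ENNReal.mul_lt_top (by simp) ?_
    rw [ENNReal.inv_lt_top]
    exact tsub_pos_of_lt hc1
  -- pointwise bound
  have hpt : ∀ ω, (T ω : ℕ∞).toENNReal ≤ ∑' n : ℕ, (B n).indicator (fun _ => (1 : ℝ≥0∞)) ω := by
    intro ω
    cases hTw : T ω with
    | top =>
      have hmem : ∀ n : ℕ, ω ∈ B n := by
        intro n hle
        have hle' : T ω ≤ (n : ℕ∞) := hle
        rw [hTw] at hle'
        exact (WithTop.coe_ne_top (a := n)) (top_le_iff.mp hle')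
      have : ∑' n : ℕ, (B n).indicator (fun _ => (1 : ℝ≥0∞)) ω = ⊤ := by
        have : ∀ n : ℕ, (B n).indicator (fun _ => (1 : ℝ≥0∞)) ω = 1 := fun n =>
          Set.indicator_of_mem (hmem n) _
        simp_rw [this]
        exact ENNReal.tsum_const_eq_top_of_ne_zero one_ne_zero
      rw [this]
      exact le_top
    | coe k =>
      have hbound : ∀ n ∈ Finset.range k, (B n).indicator (fun _ => (1 : ℝ≥0∞)) ω = 1 := by
        intro n hn
        refine Set.indicator_of_mem ?_ _
        intro hle
        have hle' : T ω ≤ (n : ℕ∞) := hle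
        rw [hTw] at hle'
        exact absurd (Nat.cast_le.mp hle') (Nat.not_le.mpr (Finset.mem_range.mp hn))
      calc ((k : ℕ∞) : ℕ∞).toENNReal = (k : ℝ≥0∞) := by simp
        _ = ∑ n ∈ Finset.range k, (B n).indicator (fun _ => (1 : ℝ≥0∞)) ω := by
            rw [Finset.sum_congr rfl hbound]
            simp
        _ ≤ ∑' n : ℕ, (B n).indicator (fun _ => (1 : ℝ≥0∞)) ω := ENNReal.sum_le_tsum _
  have hlin : (∫⁻ ω, ENat.toENNReal (T ω) ∂P) < ⊤ := by
    calc ∫⁻ ω, ENat.toENNReal (T ω) ∂P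
        ≤ ∫⁻ ω, ∑' n : ℕ, (B n).indicator (fun _ => (1 : ℝ≥0∞)) ω ∂P := lintegral_mono hpt
      _ = ∑' n : ℕ, ∫⁻ ω, (B n).indicator (fun _ => (1 : ℝ≥0∞)) ω ∂P :=
          lintegral_tsum fun n => (measurable_const.indicator (hBm n)).aemeasurable
      _ = ∑' n : ℕ, P (B n) := by
          refine tsum_congr fun n => ?_
          exact lintegral_indicator_one (hBm n)
      _ ≤ ∑' n : ℕ, c ^ (n / N) := ENNReal.tsum_le_tsum hPB
      _ < ⊤ := hsumfin
  refine ⟨hlin, ?_⟩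
  -- measurability of T
  have hTmeas : Measurable T := by
    refine measurable_to_countable' fun x => ?_
    cases x with
    | top =>
      have : T ⁻¹' {⊤} = ⋂ n : ℕ, (A n)ᶜ := by
        ext ω
        simp only [Set.mem_preimage, Set.mem_singleton_iff, Set.mem_iInter, Set.mem_compl_iff,
          hA, Set.mem_setOf_eq]
        constructor
        · intro h n hle
          rw [h] at hle
          exact (WithTop.coe_ne_top (a := n)) (top_le_iff.mp hle)
        · intro h
          by_contra hne
          obtain ⟨k, hk⟩ := WithTop.ne_top_iff_exists.mp hne
          exact h k (le_of_eq hk.symm)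
      rw [this]
      exact MeasurableSet.iInter fun n => (hTm n).compl
    | coe k =>
      cases k with
      | zero =>
        have : T ⁻¹' {((0 : ℕ) : ℕ∞)} = A 0 := by
          ext ω
          simp [hA, le_zero_iff]
        rw [this]
        exact hTm 0
      | succ k =>
        have : T ⁻¹' {((k + 1 : ℕ) : ℕ∞)} = A (k + 1) \ A k := by
          ext ω
          simp only [Set.mem_preimage, Set.mem_singleton_iff, Set.mem_diff, hA, Set.mem_setOf_eq]
          constructor
          · intro h
            rw [h]
            constructor
            · exact le_refl _
            · intro hle
              exact absurd (Nat.cast_le.mp hle) (by omega)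
          · rintro ⟨h1, h2⟩
            have hlt : (k : ℕ∞) < T ω := lt_of_not_ge h2
            have : ((k : ℕ∞) + 1) ≤ T ω :=
              (ENat.add_one_le_iff (WithTop.coe_ne_top (a := k))).mpr hlt
            refine le_antisymm h1 ?_
            rwa [show ((k + 1 : ℕ) : ℕ∞) = (k : ℕ∞) + 1 by push_cast; rfl]
        rw [this]
        exact (hTm (k + 1)).diff (hTm k)
  have hgm : Measurable fun ω => ENat.toENNReal (T ω) :=
    (measurable_of_countable ENat.toENNReal).comp hTmeas
  filter_upwards [ae_lt_top hgm hlin.ne] with ω hω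
  rw [lt_top_iff_ne_top] at hω ⊢
  intro h
  exact hω (by simp [h])
end

section
/- Let X be a measurable space, κ a Markov kernel from X to X, and for x ∈ X let ℙ_x denote the law of the time-homogeneous Markov chain (X_n)_{n∈ℕ} with X_0 = x and transition kernel κ (the trajectory measure on X^ℕ given by the Ionescu–Tulcea construction). Let E ⊆ X be a measurable set and ε > 0. Assume: (i) for every x ∈ X, ℙ_x-almost surely the chain visits E infinitely often (i.e. {n : X_n ∈ E} is infinite); (ii) for every y ∈ E, ℙ_y(X_n ∈ E for all n ≥ 0) ≥ ε. Then for every x ∈ X, ℙ_x-almost surely the chain is eventually in E, i.e. there exists n_0 such that X_n ∈ E for all n ≥ n_0. -/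
open MeasureTheory ProbabilityTheory Filter ENNReal

section Stmt7Aux

variable {X : Type*}

/-- `afterSet A F n`: there is `m < n` with `ω ∈ F m`, `ω n ∈ A`, and no
time strictly between `m` and `n` lies in `A`. -/
def Stmt7.afterSet (A : Set X) (F : ℕ → Set (ℕ → X)) (n : ℕ) : Set (ℕ → X) :=
  ⋃ m, ⋃ _ : m < n, F m ∩ {ω | ω n ∈ A ∧ ∀ j, m < j → j < n → ω j ∉ A}

/-- First visit to `E` at time `n`. -/
def Stmt7.V0 (E : Set X) (n : ℕ) : Set (ℕ → X) := {ω | ω n ∈ E ∧ ∀ j < n, ω j ∉ E}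

/-- Alternating stopping events: `(VW E k).1 n` = "the `k`-th visit-block starts at `n`",
`(VW E k).2 n` = "the exit after the `k`-th visit-block happens at `n`". -/
def Stmt7.VW (E : Set X) : ℕ → (ℕ → Set (ℕ → X)) × (ℕ → Set (ℕ → X))
  | 0 => (Stmt7.V0 E, Stmt7.afterSet Eᶜ (Stmt7.V0 E))
  | k + 1 => (Stmt7.afterSet E (Stmt7.VW E k).2,
      Stmt7.afterSet Eᶜ (Stmt7.afterSet E (Stmt7.VW E k).2))

namespace Stmt7

lemma VW_snd (E : Set X) (k : ℕ) : (VW E k).2 = afterSet Eᶜ (VW E k).1 := by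
  cases k <;> rfl

/-- cylinder σ-algebra at level `n`. -/
def cyl (X : Type*) [MeasurableSpace X] (n : ℕ) : MeasurableSpace (ℕ → X) :=
  MeasurableSpace.comap (fun (ω : ℕ → X) (i : Fin (n + 1)) => ω (i : ℕ)) inferInstance

variable [MeasurableSpace X]

lemma cyl_le_pi (n : ℕ) : cyl X n ≤ MeasurableSpace.pi :=
  (measurable_pi_lambda _ fun _ => measurable_pi_apply _).comap_le

lemma cyl_mono {m n : ℕ} (h : m ≤ n) : cyl X m ≤ cyl X n := by
  have hg : Measurable fun (y : Fin (n + 1) → X) (i : Fin (m + 1)) =>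
      y (Fin.castLE (by omega) i) :=
    measurable_pi_lambda _ fun _ => measurable_pi_apply _
  have heq : (fun (ω : ℕ → X) (i : Fin (m + 1)) => ω (i : ℕ))
      = (fun (y : Fin (n + 1) → X) (i : Fin (m + 1)) => y (Fin.castLE (by omega) i))
        ∘ (fun (ω : ℕ → X) (i : Fin (n + 1)) => ω (i : ℕ)) := by
    funext ω i; simp [Fin.coe_castLE]
  rw [cyl, heq, ← MeasurableSpace.comap_comp]
  exact MeasurableSpace.comap_mono hg.comap_le

lemma measurableSet_coord {A : Set X} (hA : MeasurableSet A) {j n : ℕ} (h : j ≤ n) :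
    MeasurableSet[cyl X n] {ω : ℕ → X | ω j ∈ A} := by
  have h1 : MeasurableSet ((fun y : Fin (n + 1) → X => y ⟨j, by omega⟩) ⁻¹' A) :=
    (measurable_pi_apply _) hA
  exact MeasurableSpace.measurableSet_comap.2 ⟨_, h1, rfl⟩

lemma measurableSet_between {A : Set X} (hA : MeasurableSet A) {m n : ℕ} :
    MeasurableSet[cyl X n] {ω : ℕ → X | ω n ∈ A ∧ ∀ j, m < j → j < n → ω j ∉ A} := by
  have heq : {ω : ℕ → X | ω n ∈ A ∧ ∀ j, m < j → j < n → ω j ∉ A}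
      = {ω : ℕ → X | ω n ∈ A} ∩
        ⋂ j, ⋂ _ : m < j, ⋂ _ : j < n, {ω : ℕ → X | ω j ∈ A}ᶜ := by
    ext ω
    simp only [Set.mem_setOf_eq, Set.mem_inter_iff, Set.mem_iInter, Set.mem_compl_iff]
  rw [heq]
  exact (measurableSet_coord hA le_rfl).inter <|
    MeasurableSet.iInter fun j => MeasurableSet.iInter fun _ =>
      MeasurableSet.iInter fun hj => (measurableSet_coord hA hj.le).compl

lemma measurableSet_afterSet {A : Set X} (hA : MeasurableSet A) {F : ℕ → Set (ℕ → X)}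
    (hF : ∀ m, MeasurableSet[cyl X m] (F m)) (n : ℕ) :
    MeasurableSet[cyl X n] (afterSet A F n) :=
  MeasurableSet.iUnion fun m => MeasurableSet.iUnion fun hm =>
    ((cyl_mono hm.le) _ (hF m)).inter (measurableSet_between hA)

lemma measurableSet_V0 {E : Set X} (hE : MeasurableSet E) (n : ℕ) :
    MeasurableSet[cyl X n] (V0 E n) := by
  have heq : V0 E n = {ω : ℕ → X | ω n ∈ E} ∩
      ⋂ j, ⋂ _ : j < n, {ω : ℕ → X | ω j ∈ E}ᶜ := by
    ext ω
    simp only [V0, Set.mem_setOf_eq, Set.mem_inter_iff, Set.mem_iInter, Set.mem_compl_iff]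
  rw [heq]
  exact (measurableSet_coord hE le_rfl).inter <|
    MeasurableSet.iInter fun j => MeasurableSet.iInter fun hj =>
      (measurableSet_coord hE hj.le).compl

lemma measurableSet_VW {E : Set X} (hE : MeasurableSet E) (k : ℕ) :
    (∀ n, MeasurableSet[cyl X n] ((VW E k).1 n)) ∧
      (∀ n, MeasurableSet[cyl X n] ((VW E k).2 n)) := by
  induction k with
  | zero =>
    refine ⟨measurableSet_V0 hE, ?_⟩
    exact measurableSet_afterSet hE.compl (measurableSet_V0 hE)
  | succ k ih =>
    refine ⟨measurableSet_afterSet hE ih.2, ?_⟩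
    exact measurableSet_afterSet hE.compl (measurableSet_afterSet hE ih.2)

lemma afterSet_subset {A : Set X} {F : ℕ → Set (ℕ → X)} (n : ℕ) :
    afterSet A F n ⊆ {ω | ω n ∈ A} := by
  rintro ω hω
  simp only [afterSet, Set.mem_iUnion] at hω
  obtain ⟨m, hm, _, hn, _⟩ := hω
  exact hn

/-- "uniqueness": an element belongs to at most one member of the family. -/
def Uniq (F : ℕ → Set (ℕ → X)) : Prop :=
  ∀ ⦃n n' : ℕ⦄ (ω : ℕ → X), ω ∈ F n → ω ∈ F n' → n = n'

lemma uniq_afterSet {A : Set X} {F : ℕ → Set (ℕ → X)} (hU : Uniq F)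
    (hmem : ∀ m, F m ⊆ {ω | ω m ∉ A}) : Uniq (afterSet A F) := by
  intro n n' ω hn hn'
  simp only [afterSet, Set.mem_iUnion] at hn hn'
  obtain ⟨m, hmn, hFm, hA, hbet⟩ := hn
  obtain ⟨m', hmn', hFm', hA', hbet'⟩ := hn'
  have hmm : m = m' := hU ω hFm hFm'
  subst hmm
  rcases lt_trichotomy n n' with h | h | h
  · exact absurd hA (hbet' n hmn h)
  · exact h
  · exact absurd hA' (hbet n' hmn' h)

lemma uniq_V0 (E : Set X) : Uniq (V0 E) := by
  intro n n' ω hn hn'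
  rcases lt_trichotomy n n' with h | h | h
  · exact absurd hn.1 (hn'.2 n h)
  · exact h
  · exact absurd hn'.1 (hn.2 n' h)

lemma VW_mem (E : Set X) (k : ℕ) :
    (∀ n, (VW E k).1 n ⊆ {ω | ω n ∈ E}) ∧ (∀ n, (VW E k).2 n ⊆ {ω | ω n ∉ E}) := by
  induction k with
  | zero => exact ⟨fun n ω h => h.1, fun n => afterSet_subset n⟩
  | succ k _ => exact ⟨fun n => afterSet_subset n, fun n => afterSet_subset n⟩

lemma uniq_VW (E : Set X) (k : ℕ) : Uniq (VW E k).1 ∧ Uniq (VW E k).2 := by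
  induction k with
  | zero =>
    refine ⟨uniq_V0 E, uniq_afterSet (uniq_V0 E) ?_⟩
    intro m ω h
    simpa using h.1
  | succ k ih =>
    have h1 : Uniq (VW E (k + 1)).1 := by
      refine uniq_afterSet ih.2 ?_
      intro m
      exact (VW_mem E k).2 m
    refine ⟨h1, uniq_afterSet h1 ?_⟩
    intro m ω h
    have := (VW_mem E (k + 1)).1 m h
    simpa using this

lemma exists_afterSet_mem {A : Set X} {F : ℕ → Set (ℕ → X)} {ω : ℕ → X} {m : ℕ}
    (hF : ω ∈ F m) (hinf : {n | ω n ∈ A}.Infinite) : ∃ n, ω ∈ afterSet A F n := by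
  obtain ⟨n₁, hn₁, hn₁m⟩ := hinf.exists_gt m
  have hne : {j | m < j ∧ ω j ∈ A}.Nonempty := ⟨n₁, hn₁m, hn₁⟩
  set n := sInf {j | m < j ∧ ω j ∈ A} with hn
  have hmem : m < n ∧ ω n ∈ A := Nat.sInf_mem hne
  refine ⟨n, ?_⟩
  simp only [afterSet, Set.mem_iUnion]
  refine ⟨m, hmem.1, hF, hmem.2, fun j hj hjn hjA => ?_⟩
  exact absurd (Nat.sInf_le (show j ∈ {j | m < j ∧ ω j ∈ A} from ⟨hj, hjA⟩)) (by omega)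

lemma exists_VW_mem {E : Set X} {ω : ℕ → X} (h1 : {n | ω n ∈ E}.Infinite)
    (h2 : {n | ω n ∉ E}.Infinite) (k : ℕ) :
    (∃ n, ω ∈ (VW E k).1 n) ∧ (∃ n, ω ∈ (VW E k).2 n) := by
  have h2' : {n | ω n ∈ Eᶜ}.Infinite := h2
  induction k with
  | zero =>
    have hne : {j | ω j ∈ E}.Nonempty := h1.nonempty
    set n := sInf {j | ω j ∈ E} with hn
    have hv : ω ∈ V0 E n :=
      ⟨Nat.sInf_mem hne,
        fun j hj hjE => absurd (Nat.sInf_le (show j ∈ {j | ω j ∈ E} from hjE)) (by omega)⟩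
    exact ⟨⟨n, hv⟩, exists_afterSet_mem hv h2'⟩
  | succ k ih =>
    obtain ⟨m, hm⟩ := ih.2
    have hv : ∃ n, ω ∈ (VW E (k + 1)).1 n := exists_afterSet_mem hm h1
    obtain ⟨m', hm'⟩ := hv
    exact ⟨⟨m', hm'⟩, exists_afterSet_mem hm' h2'⟩

end Stmt7

end Stmt7Aux

/-- Let `κ` be a Markov kernel on `X` and, for `x : X`, let `P x` be the law on `X^ℕ`
of the time-homogeneous Markov chain started at `x` with transition kernel `κ` (the
Ionescu–Tulcea trajectory measure), characterized here by: `P x` is a probability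
measure, the chain starts at `x`, the one-step law is `κ x`, and the time-homogeneous
Markov property holds. Let `E` be a measurable set and `ε > 0` with: (i) for every `x`,
`P x`-a.s. the chain visits `E` infinitely often; (ii) for every `y ∈ E`,
`P y (∀ n, X n ∈ E) ≥ ε`. Then for every `x`, `P x`-a.s. the chain is eventually in `E`. -/
theorem stmt7 {X : Type*} [MeasurableSpace X]
    (κ : Kernel X X) [IsMarkovKernel κ]
    (P : X → Measure (ℕ → X))
    (hprob : ∀ x, IsProbabilityMeasure (P x))
    (hstart : ∀ x, P x {ω | ω 0 = x} = 1)
    (hstep : ∀ x, (P x).map (fun ω => ω 1) = κ x)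
    (hmarkov : ∀ (x : X) (n : ℕ) (B : Set (ℕ → X)),
      MeasurableSet[MeasurableSpace.comap
        (fun (ω : ℕ → X) (i : Fin (n + 1)) => ω (i : ℕ)) inferInstance] B →
      ∀ g : (ℕ → X) → ℝ≥0∞, Measurable g →
        ∫⁻ ω in B, g (fun k => ω (k + n)) ∂(P x)
          = ∫⁻ ω in B, (∫⁻ ω', g ω' ∂(P (ω n))) ∂(P x))
    (E : Set X) (hE : MeasurableSet E) (ε : ℝ) (hε : 0 < ε)
    (hio : ∀ x, ∀ᵐ ω ∂(P x), {n : ℕ | ω n ∈ E}.Infinite)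
    (hinv : ∀ y ∈ E, ENNReal.ofReal ε ≤ P y {ω | ∀ n : ℕ, ω n ∈ E}) :
    ∀ x, ∀ᵐ ω ∂(P x), ∃ n₀ : ℕ, ∀ n ≥ n₀, ω n ∈ E := by
  classical
  open Stmt7 in
  intro x
  haveI := fun y => hprob y
  set ε' : ℝ≥0∞ := ENNReal.ofReal ε with hε'def
  have hε'pos : 0 < ε' := ENNReal.ofReal_pos.2 hε
  set r : ℝ≥0∞ := 1 - ε' with hrdef
  have hr1 : r < 1 := ENNReal.sub_lt_self one_ne_top one_ne_zero hε'pos.ne'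
  -- the "exit" event
  set Exit : Set (ℕ → X) := {ω : ℕ → X | ∃ n, ω n ∉ E} with hExitdef
  have hExitmeas : MeasurableSet Exit := by
    have : Exit = ⋃ n, (fun ω : ℕ → X => ω n) ⁻¹' Eᶜ := by
      ext ω; simp [hExitdef]
    rw [this]
    exact MeasurableSet.iUnion fun n => (measurable_pi_apply n) hE.compl
  have hExitcompl : Exitᶜ = {ω : ℕ → X | ∀ n, ω n ∈ E} := by
    ext ω; simp [hExitdef]
  -- probability of exiting, starting from a point of E
  have hExit_le : ∀ y ∈ E, P y Exit ≤ r := by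
    intro y hy
    have h1 : P y Exit = 1 - P y Exitᶜ := by
      have h2 := measure_compl (μ := P y) hExitmeas.compl (measure_ne_top _ _)
      rwa [compl_compl, measure_univ] at h2
    rw [h1, hExitcompl]
    exact tsub_le_tsub_left (hinv y hy) 1
  -- key one-step estimate
  have hstep_key : ∀ (m : ℕ) (B : Set (ℕ → X)), MeasurableSet[cyl X m] B →
      B ⊆ {ω | ω m ∈ E} →
      P x (B ∩ (fun ω k => ω (k + m)) ⁻¹' Exit) ≤ r * P x B := by
    intro m B hB hBE
    have hBpi : MeasurableSet B := cyl_le_pi m _ hB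
    have hshift : Measurable fun (ω : ℕ → X) (k : ℕ) => ω (k + m) :=
      measurable_pi_lambda _ fun _ => measurable_pi_apply _
    set g : (ℕ → X) → ℝ≥0∞ := Exit.indicator 1 with hgdef
    have hgmeas : Measurable g := measurable_one.indicator hExitmeas
    have hmk := hmarkov x m B hB g hgmeas
    have hLHS : ∫⁻ ω in B, g (fun k => ω (k + m)) ∂(P x)
        = P x (B ∩ (fun ω k => ω (k + m)) ⁻¹' Exit) := by
      have : (fun ω : ℕ → X => g (fun k => ω (k + m)))
          = ((fun ω : ℕ → X => fun k => ω (k + m)) ⁻¹' Exit).indicator 1 := by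
        funext ω
        by_cases h : (fun k => ω (k + m)) ∈ Exit <;>
          simp [hgdef, Set.indicator_apply, h]
      rw [this, lintegral_indicator_one (hshift hExitmeas),
        Measure.restrict_apply (hshift hExitmeas), Set.inter_comm]
    have hRHS : ∫⁻ ω in B, (∫⁻ ω', g ω' ∂(P (ω m))) ∂(P x) ≤ r * P x B := by
      have hinner : ∀ ω ∈ B, (∫⁻ ω', g ω' ∂(P (ω m))) ≤ r := by
        intro ω hω
        rw [hgdef, lintegral_indicator_one hExitmeas]
        exact hExit_le (ω m) (hBE hω)
      calc ∫⁻ ω in B, (∫⁻ ω', g ω' ∂(P (ω m))) ∂(P x)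
          ≤ ∫⁻ _ in B, r ∂(P x) := by
            refine lintegral_mono_ae ?_
            exact (ae_restrict_iff' hBpi).2 (ae_of_all _ hinner)
        _ = r * P x B := setLIntegral_const B r
    calc P x (B ∩ (fun ω k => ω (k + m)) ⁻¹' Exit) = _ := hLHS.symm
      _ = _ := hmk
      _ ≤ r * P x B := hRHS
  -- the induction giving the geometric bound
  have hstep_union : ∀ (F : ℕ → Set (ℕ → X)), (∀ n, MeasurableSet[cyl X n] (F n)) →
      Uniq F → (∀ n, F n ⊆ {ω | ω n ∈ E}) →
      P x (⋃ n, afterSet Eᶜ F n) ≤ r * P x (⋃ n, F n) := by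
    intro F hFmeas hFuniq hFE
    have hsub : (⋃ n, afterSet Eᶜ F n) ⊆ ⋃ m, (F m ∩ (fun ω k => ω (k + m)) ⁻¹' Exit) := by
      rintro ω hω
      simp only [Set.mem_iUnion] at hω ⊢
      obtain ⟨n, hn⟩ := hω
      simp only [afterSet, Set.mem_iUnion] at hn
      obtain ⟨m, hmn, hFm, hnA, _⟩ := hn
      refine ⟨m, hFm, ?_⟩
      simp only [Set.mem_preimage, hExitdef, Set.mem_setOf_eq]
      refine ⟨n - m, ?_⟩
      have : n - m + m = n := by omega
      rw [this]
      simpa using hnA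
    calc P x (⋃ n, afterSet Eᶜ F n)
        ≤ P x (⋃ m, (F m ∩ (fun ω k => ω (k + m)) ⁻¹' Exit)) := measure_mono hsub
      _ ≤ ∑' m, P x (F m ∩ (fun ω k => ω (k + m)) ⁻¹' Exit) := measure_iUnion_le _
      _ ≤ ∑' m, r * P x (F m) :=
          ENNReal.tsum_le_tsum fun m => hstep_key m (F m) (hFmeas m) (hFE m)
      _ = r * ∑' m, P x (F m) := ENNReal.tsum_mul_left
      _ = r * P x (⋃ m, F m) := by
          rw [measure_iUnion ?_ fun m => cyl_le_pi m _ (hFmeas m)]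
          intro i j hij
          exact Set.disjoint_left.2 fun ω hi hj => hij (hFuniq ω hi hj)
  have hbound : ∀ k, P x (⋃ n, (VW E k).2 n) ≤ r ^ (k + 1) := by
    intro k
    induction k with
    | zero =>
      have h := hstep_union (VW E 0).1 (measurableSet_VW hE 0).1 (uniq_VW E 0).1
        (VW_mem E 0).1
      rw [VW_snd]
      calc P x (⋃ n, afterSet Eᶜ ((VW E 0).1) n) ≤ r * P x (⋃ n, (VW E 0).1 n) := h
        _ ≤ r * 1 := mul_le_mul_right prob_le_one r
        _ = r ^ (0 + 1) := by ring
    | succ k ih =>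
      have h := hstep_union (VW E (k + 1)).1 (measurableSet_VW hE (k + 1)).1
        (uniq_VW E (k + 1)).1 (VW_mem E (k + 1)).1
      have hsub : (⋃ n, (VW E (k + 1)).1 n) ⊆ ⋃ n, (VW E k).2 n := by
        rintro ω hω
        simp only [Set.mem_iUnion] at hω ⊢
        obtain ⟨n, hn⟩ := hω
        have : (VW E (k + 1)).1 n = afterSet E (VW E k).2 n := rfl
        rw [this] at hn
        simp only [afterSet, Set.mem_iUnion] at hn
        obtain ⟨m, _, hm, _⟩ := hn
        exact ⟨m, hm⟩
      calc P x (⋃ n, (VW E (k + 1)).2 n)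
          = P x (⋃ n, afterSet Eᶜ ((VW E (k + 1)).1) n) := by rw [← VW_snd]
        _ ≤ r * P x (⋃ n, (VW E (k + 1)).1 n) := h
        _ ≤ r * P x (⋃ n, (VW E k).2 n) := mul_le_mul_right (measure_mono hsub) r
        _ ≤ r * r ^ (k + 1) := mul_le_mul_right ih r
        _ = r ^ (k + 1 + 1) := by ring
  -- the intersection has measure zero
  have hinter : P x (⋂ k, ⋃ n, (VW E k).2 n) = 0 := by
    have hle : ∀ k, P x (⋂ k, ⋃ n, (VW E k).2 n) ≤ r ^ (k + 1) := fun k =>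
      (measure_mono (Set.iInter_subset _ k)).trans (hbound k)
    have htends : Tendsto (fun k : ℕ => r ^ (k + 1)) atTop (nhds 0) :=
      (ENNReal.tendsto_pow_atTop_nhds_zero_of_lt_one hr1).comp (tendsto_add_atTop_nat 1)
    exact le_antisymm (ge_of_tendsto' htends hle) zero_le
  -- conclusion
  rw [ae_iff]
  have hio' : P x {ω : ℕ → X | ¬ {n : ℕ | ω n ∈ E}.Infinite} = 0 := by
    have := hio x
    rwa [ae_iff] at this
  refine measure_mono_null ?_
    (measure_union_null hio' hinter)
  rintro ω hω
  simp only [Set.mem_setOf_eq, not_exists] at hω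
  by_cases hfin : {n : ℕ | ω n ∈ E}.Infinite
  · right
    have h2 : {n : ℕ | ω n ∉ E}.Infinite := by
      apply Set.infinite_of_not_bddAbove
      rintro ⟨b, hb⟩
      have := hω (b + 1)
      push_neg at this
      obtain ⟨n, hn, hnE⟩ := this
      exact absurd (hb hnE) (by omega)
    simp only [Set.mem_iInter, Set.mem_iUnion]
    exact fun k => (exists_VW_mem hfin h2 k).2
  · left
    exact hfin
end

section
/- Let X be a measurable space, κ a Markov kernel from X to X, and for x ∈ X let ℙ_x denote the law of the time-homogeneous Markov chain (X_n)_{n∈ℕ} with X_0 = x and transition kernel κ (the trajectory measure on X^ℕ given by the Ionescu–Tulcea construction). Let E ⊆ X be a measurable set and ε > 0, and assume: (i) for every x ∈ X, ℙ_x-almost surely the chain visits E infinitely often; (ii) for every y ∈ E, ℙ_y(X_n ∈ E for all n ≥ 0) ≥ ε. For a trajectory (X_n), let U denote the number of exits from E, i.e. the number of indices n with X_n ∈ E and X_{n+1} ∉ E. Then for every starting point x ∈ E and every integer N ≥ 1, ℙ_x(U ≥ N) ≤ (1 − ε)^N. -/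
open MeasureTheory ProbabilityTheory Filter ENNReal

section Stmt8Aux

variable {X : Type*} [MeasurableSpace X]

/-- Set of exit times from `E` along trajectory `ω`. -/
def exitSet (E : Set X) (ω : ℕ → X) : Set ℕ := {n | ω n ∈ E ∧ ω (n + 1) ∉ E}

/-- Event: at least `N` exits. -/
def Aev (E : Set X) (N : ℕ) : Set (ℕ → X) := {ω | (N : ℕ∞) ≤ (exitSet E ω).encard}

lemma mem_Aev_iff (E : Set X) (N : ℕ) (ω : ℕ → X) :
    ω ∈ Aev E N ↔ ∃ t : Finset ℕ, t.card = N ∧ ∀ k ∈ t, k ∈ exitSet E ω := by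
  constructor
  · intro h
    obtain ⟨t, hts, htc⟩ := Set.exists_subset_encard_eq h
    have hfin : t.Finite := Set.finite_of_encard_eq_coe htc
    refine ⟨hfin.toFinset, ?_, fun k hk => hts (hfin.mem_toFinset.mp hk)⟩
    have := hfin.encard_eq_coe_toFinset_card
    rw [this] at htc
    exact_mod_cast htc
  · rintro ⟨t, htc, hts⟩
    calc (N : ℕ∞) = (↑t : Set ℕ).encard := by
          rw [Set.encard_coe_eq_coe_finsetCard, htc]
      _ ≤ (exitSet E ω).encard := Set.encard_mono (fun k hk => hts k hk)

lemma measurableSet_Aev (E : Set X) (hE : MeasurableSet E) (N : ℕ) :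
    MeasurableSet (Aev E N) := by
  have : Aev E N = ⋃ (t : Finset ℕ) (_ : t.card = N),
      ⋂ k ∈ t, ((fun ω : ℕ → X => ω k) ⁻¹' E ∩ (fun ω : ℕ → X => ω (k + 1)) ⁻¹' Eᶜ) := by
    ext ω
    simp only [mem_Aev_iff, Set.mem_iUnion, Set.mem_iInter, Set.mem_inter_iff,
      Set.mem_preimage, Set.mem_compl_iff, exitSet, Set.mem_setOf_eq]
    tauto
  rw [this]
  refine MeasurableSet.iUnion fun t => MeasurableSet.iUnion fun _ =>
    MeasurableSet.biInter (Set.to_countable _) fun k _ => ?_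
  exact ((measurable_pi_apply k) hE).inter ((measurable_pi_apply (k + 1)) hE.compl)

/-- `Q E n ω`: the first return to `E` after the first exit from `E` happens at time `n`. -/
def Q (E : Set X) (n : ℕ) (ω : ℕ → X) : Prop :=
  ω n ∈ E ∧ ∃ t, t < n ∧ (ω t ∈ E ∧ ω (t + 1) ∉ E) ∧ (∀ i, t < i → i < n → ω i ∉ E) ∧
    ∀ s, s < t → ¬(ω s ∈ E ∧ ω (s + 1) ∉ E)

lemma Q_congr (E : Set X) (n : ℕ) {ω ω' : ℕ → X} (h : ∀ k, k ≤ n → ω k = ω' k) :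
    Q E n ω ↔ Q E n ω' := by
  have key : ∀ (a b : ℕ → X), (∀ k, k ≤ n → a k = b k) → Q E n a → Q E n b := by
    rintro a b hab ⟨h1, t, htn, ⟨he1, he2⟩, hmid, hfirst⟩
    refine ⟨(hab n le_rfl) ▸ h1, t, htn, ⟨(hab t htn.le) ▸ he1, (hab (t+1) htn) ▸ he2⟩,
      fun i h1' h2' => (hab i h2'.le) ▸ hmid i h1' h2', fun s hs => ?_⟩
    have e1 := hab s (by omega)
    have e2 := hab (s+1) (by omega)
    rw [← e1, ← e2]
    exact hfirst s hs
  exact ⟨key ω ω' h, key ω' ω (fun k hk => (h k hk).symm)⟩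

lemma measurableSet_Q (E : Set X) (hE : MeasurableSet E) (n : ℕ) :
    MeasurableSet {ω : ℕ → X | Q E n ω} := by
  have : {ω : ℕ → X | Q E n ω} =
      (fun ω : ℕ → X => ω n) ⁻¹' E ∩ ⋃ (t : ℕ) (_ : t < n),
        ((fun ω : ℕ → X => ω t) ⁻¹' E ∩ (fun ω : ℕ → X => ω (t + 1)) ⁻¹' Eᶜ) ∩
        (⋂ (i : ℕ) (_ : t < i) (_ : i < n), (fun ω : ℕ → X => ω i) ⁻¹' Eᶜ) ∩
        (⋂ (s : ℕ) (_ : s < t),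
          ((fun ω : ℕ → X => ω s) ⁻¹' E ∩ (fun ω : ℕ → X => ω (s + 1)) ⁻¹' Eᶜ)ᶜ) := by
    ext ω
    simp only [Q, Set.mem_setOf_eq, Set.mem_inter_iff, Set.mem_preimage, Set.mem_iUnion,
      Set.mem_iInter, Set.mem_compl_iff, Set.mem_inter_iff, Set.mem_preimage]
    tauto
  rw [this]
  have hc : ∀ k : ℕ, MeasurableSet ((fun ω : ℕ → X => ω k) ⁻¹' E) :=
    fun k => (measurable_pi_apply k) hE
  have hcc : ∀ k : ℕ, MeasurableSet ((fun ω : ℕ → X => ω k) ⁻¹' Eᶜ) :=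
    fun k => (measurable_pi_apply k) hE.compl
  refine (hc n).inter (MeasurableSet.iUnion fun t => MeasurableSet.iUnion fun _ => ?_)
  refine (((hc t).inter (hcc (t+1))).inter ?_).inter ?_
  · exact MeasurableSet.iInter fun i => MeasurableSet.iInter fun _ =>
      MeasurableSet.iInter fun _ => hcc i
  · exact MeasurableSet.iInter fun s => MeasurableSet.iInter fun _ =>
      ((hc s).inter (hcc (s+1))).compl

lemma measurableSet_comap_Q (E : Set X) (hE : MeasurableSet E) (n : ℕ) :
    MeasurableSet[MeasurableSpace.comap
      (fun (ω : ℕ → X) (i : Fin (n + 1)) => ω (i : ℕ)) inferInstance]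
      {ω : ℕ → X | Q E n ω} := by
  rw [MeasurableSpace.measurableSet_comap]
  refine ⟨(fun (v : Fin (n + 1) → X) (k : ℕ) => v ⟨min k n, by omega⟩) ⁻¹' {ω | Q E n ω},
    ?_, ?_⟩
  · refine (measurableSet_Q E hE n).preimage (measurable_pi_lambda _ fun k => ?_)
    exact measurable_pi_apply _
  · ext ω
    simp only [Set.mem_preimage, Set.mem_setOf_eq]
    exact Q_congr E n (fun k hk => by simp [min_eq_left hk])

lemma Q_disjoint (E : Set X) : Pairwise (Function.onFun Disjoint
    (fun n => {ω : ℕ → X | Q E n ω})) := by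
  intro m n hmn
  wlog h : m < n generalizing m n
  · exact (this hmn.symm (by omega)).symm
  refine Set.disjoint_left.mpr ?_
  rintro ω ⟨hm1, t, htm, hte, hmidm, hfirstm⟩ ⟨hn1, t', htn', hte', hmidn, hfirstn⟩
  have htt : t = t' := by
    by_contra hne
    rcases Nat.lt_or_ge t t' with h' | h'
    · exact hfirstn t h' hte
    · exact hfirstm t' (by omega) hte'
  subst htt
  exact hmidn m (by omega) h hm1

/-- On the event `Q E n`, the exit set decomposes as the first exit plus the
exits of the shifted trajectory. -/
lemma exitSet_eq_of_Q (E : Set X) (n : ℕ) (ω : ℕ → X) (hQ : Q E n ω) :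
    ∃ t, t < n ∧ exitSet E ω = insert t ((· + n) '' exitSet E (fun k => ω (k + n))) := by
  obtain ⟨hn1, t, htn, hte, hmid, hfirst⟩ := hQ
  refine ⟨t, htn, ?_⟩
  ext m
  simp only [Set.mem_insert_iff, Set.mem_image, exitSet, Set.mem_setOf_eq]
  constructor
  · rintro ⟨hmE, hmE'⟩
    rcases Nat.lt_or_ge m n with hmn | hmn
    · left
      by_contra hne
      rcases Nat.lt_or_ge m t with h' | h'
      · exact hfirst m h' ⟨hmE, hmE'⟩
      · exact hmid m (by omega) hmn hmE
    · right
      refine ⟨m - n, ⟨?_, ?_⟩, by omega⟩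
      · have e : m - n + n = m := by omega
        rw [e]; exact hmE
      · have e : m - n + 1 + n = m + 1 := by omega
        rw [e]; exact hmE'
  · rintro (rfl | ⟨k, ⟨hk1, hk2⟩, rfl⟩)
    · exact hte
    · exact ⟨hk1, by rwa [Nat.add_right_comm] at hk2⟩

lemma Q_shift (E : Set X) (n : ℕ) (N : ℕ) (ω : ℕ → X) (hQ : Q E n ω) :
    (ω ∈ Aev E (N + 1) ↔ (fun k => ω (k + n)) ∈ Aev E N) := by
  obtain ⟨t, htn, heq⟩ := exitSet_eq_of_Q E n ω hQ
  have hnotmem : t ∉ (· + n) '' exitSet E (fun k => ω (k + n)) := by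
    rintro ⟨k, _, hkt⟩
    simp only at hkt
    omega
  have himg : ((· + n) '' exitSet E (fun k => ω (k + n))).encard
      = (exitSet E (fun k => ω (k + n))).encard :=
    Set.InjOn.encard_image (Function.Injective.injOn (add_left_injective n))
  simp only [Aev, Set.mem_setOf_eq, heq, Set.encard_insert_of_notMem hnotmem, himg]
  rw [show ((N + 1 : ℕ) : ℕ∞) = (N : ℕ∞) + 1 by push_cast; ring]
  exact WithTop.add_le_add_iff_right WithTop.one_ne_top

lemma Q_exists (E : Set X) (ω : ℕ → X) (hio : {n : ℕ | ω n ∈ E}.Infinite)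
    (hA : ω ∈ Aev E 1) : ∃ n, Q E n ω := by
  classical
  have hne : (exitSet E ω).Nonempty := by
    rw [← Set.one_le_encard_iff_nonempty]
    exact_mod_cast hA
  obtain ⟨t0, ht0⟩ := hne
  have hex : ∃ t, t ∈ exitSet E ω := ⟨t0, ht0⟩
  set t := Nat.find hex with htdef
  have htmem : t ∈ exitSet E ω := Nat.find_spec hex
  obtain ⟨m, hmE, htm⟩ := hio.exists_gt t
  have hex2 : ∃ i, t < i ∧ ω i ∈ E := ⟨m, htm, hmE⟩
  set n := Nat.find hex2 with hndef
  obtain ⟨hn1, hn2⟩ := Nat.find_spec hex2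
  refine ⟨n, hn2, t, hn1, htmem, fun i hi1 hi2 hiE => ?_, fun s hs hsE => ?_⟩
  · exact absurd ⟨hi1, hiE⟩ (Nat.find_min hex2 hi2)
  · exact absurd hsE (Nat.find_min hex hs)

end Stmt8Aux

/-- Let `κ` be a Markov kernel on `X` and, for `x : X`, let `P x` be the law on `X^ℕ`
of the time-homogeneous Markov chain started at `x` with transition kernel `κ` (the
Ionescu–Tulcea trajectory measure), characterized here by: `P x` is a probability
measure, the chain starts at `x`, the one-step law is `κ x`, and the time-homogeneous
Markov property holds. Let `E` be a measurable set and `ε > 0` with: (i) for every `x`,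
`P x`-a.s. the chain visits `E` infinitely often; (ii) for every `y ∈ E`,
`P y (∀ n, X n ∈ E) ≥ ε`. Let `U ω` be the number of exits from `E`, i.e. the
cardinality of `{n | ω n ∈ E ∧ ω (n+1) ∉ E}`. Then for every starting point `x ∈ E` and
every `N ≥ 1`, `P x (U ≥ N) ≤ (1 - ε)^N`. -/
theorem stmt8 {X : Type*} [MeasurableSpace X]
    (κ : Kernel X X) [IsMarkovKernel κ]
    (P : X → Measure (ℕ → X))
    (hprob : ∀ x, IsProbabilityMeasure (P x))
    (hstart : ∀ x, P x {ω | ω 0 = x} = 1)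
    (hstep : ∀ x, (P x).map (fun ω => ω 1) = κ x)
    (hmarkov : ∀ (x : X) (n : ℕ) (B : Set (ℕ → X)),
      MeasurableSet[MeasurableSpace.comap
        (fun (ω : ℕ → X) (i : Fin (n + 1)) => ω (i : ℕ)) inferInstance] B →
      ∀ g : (ℕ → X) → ℝ≥0∞, Measurable g →
        ∫⁻ ω in B, g (fun k => ω (k + n)) ∂(P x)
          = ∫⁻ ω in B, (∫⁻ ω', g ω' ∂(P (ω n))) ∂(P x))
    (E : Set X) (hE : MeasurableSet E) (ε : ℝ) (hε : 0 < ε)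
    (hio : ∀ x, ∀ᵐ ω ∂(P x), {n : ℕ | ω n ∈ E}.Infinite)
    (hinv : ∀ y ∈ E, ENNReal.ofReal ε ≤ P y {ω | ∀ n : ℕ, ω n ∈ E}) :
    ∀ x ∈ E, ∀ N : ℕ, 1 ≤ N →
      P x {ω | (N : ℕ∞) ≤ Set.encard {n : ℕ | ω n ∈ E ∧ ω (n + 1) ∉ E}}
        ≤ ENNReal.ofReal ((1 - ε) ^ N) := by
  intro x hx N _
  haveI := hprob
  -- ε ≤ 1
  have hε1 : ε ≤ 1 := by
    have h1 : ENNReal.ofReal ε ≤ 1 := le_trans (hinv x hx) prob_le_one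
    rwa [ENNReal.ofReal_le_one] at h1
  -- measurability of allE
  have hallE : MeasurableSet {ω : ℕ → X | ∀ n : ℕ, ω n ∈ E} := by
    have : {ω : ℕ → X | ∀ n : ℕ, ω n ∈ E} = ⋂ n, (fun ω : ℕ → X => ω n) ⁻¹' E := by
      ext ω; simp
    rw [this]
    exact MeasurableSet.iInter fun n => (measurable_pi_apply n) hE
  -- bound on probability of at least one exit
  have hA1 : ∀ y ∈ E, P y (Aev E 1) ≤ 1 - ENNReal.ofReal ε := by
    intro y hy
    have hdisj : Disjoint (Aev E 1) {ω : ℕ → X | ∀ n : ℕ, ω n ∈ E} := by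
      refine Set.disjoint_left.mpr fun ω hA hall => ?_
      have : (exitSet E ω).Nonempty := by
        rw [← Set.one_le_encard_iff_nonempty]; exact_mod_cast hA
      obtain ⟨m, _, hm2⟩ := this
      exact hm2 (hall (m + 1))
    have hsum : P y (Aev E 1) + P y {ω : ℕ → X | ∀ n : ℕ, ω n ∈ E} ≤ 1 := by
      rw [← measure_union hdisj hallE]
      exact prob_le_one
    have : P y (Aev E 1) + ENNReal.ofReal ε ≤ 1 :=
      le_trans (add_le_add_right (hinv y hy) _) hsum
    exact ENNReal.le_sub_of_add_le_right (by simp) this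
  -- main induction
  have key : ∀ N : ℕ, ∀ y ∈ E, P y (Aev E N) ≤ ENNReal.ofReal ((1 - ε) ^ N) := by
    intro N
    induction N with
    | zero => intro y _; simp [prob_le_one]
    | succ N ih =>
      intro y hy
      set QS : ℕ → Set (ℕ → X) := fun n => {ω | Q E n ω} with hQS
      have hQm : ∀ n, MeasurableSet (QS n) := fun n => measurableSet_Q E hE n
      have hAm : ∀ M, MeasurableSet (Aev E M) := measurableSet_Aev E hE
      -- a.e. covering
      have hnull : P y (Aev E (N + 1) \ ⋃ n, QS n) = 0 := by
        refine measure_mono_null (fun ω hω => ?_) ((ae_iff.mp (hio y)))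
        rintro hinf
        obtain ⟨hωA, hωU⟩ := hω
        have hA1' : ω ∈ Aev E 1 := by
          have h' : ((1 : ℕ) : ℕ∞) ≤ ((N + 1 : ℕ) : ℕ∞) := by exact_mod_cast by omega
          exact le_trans h' hωA
        obtain ⟨n, hn⟩ := Q_exists E ω hinf hA1'
        exact hωU (Set.mem_iUnion.mpr ⟨n, hn⟩)
      have step1 : P y (Aev E (N + 1)) ≤ ∑' n, P y (QS n ∩ Aev E (N + 1)) := by
        have := measure_inter_add_diff (μ := P y) (Aev E (N + 1))
          (MeasurableSet.iUnion hQm)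
        calc P y (Aev E (N + 1))
            = P y (Aev E (N + 1) ∩ ⋃ n, QS n) + P y (Aev E (N + 1) \ ⋃ n, QS n) :=
              this.symm
          _ = P y (Aev E (N + 1) ∩ ⋃ n, QS n) := by rw [hnull, add_zero]
          _ = P y (⋃ n, QS n ∩ Aev E (N + 1)) := by
              rw [Set.inter_comm, Set.iUnion_inter]
          _ ≤ ∑' n, P y (QS n ∩ Aev E (N + 1)) := measure_iUnion_le _
      -- per-term bound
      have step2 : ∀ n, P y (QS n ∩ Aev E (N + 1))
          ≤ ENNReal.ofReal ((1 - ε) ^ N) * P y (QS n) := by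
        intro n
        have hshift : QS n ∩ Aev E (N + 1)
            = QS n ∩ (fun ω : ℕ → X => fun k => ω (k + n)) ⁻¹' Aev E N := by
          ext ω
          simp only [Set.mem_inter_iff, Set.mem_preimage, hQS, Set.mem_setOf_eq]
          exact and_congr_right fun hQ => Q_shift E n N ω hQ
        have hθm : Measurable (fun ω : ℕ → X => fun k => ω (k + n)) :=
          measurable_pi_lambda _ fun k => measurable_pi_apply (k + n)
        have hpre : MeasurableSet ((fun ω : ℕ → X => fun k => ω (k + n)) ⁻¹' Aev E N) :=
          hθm (hAm N)
        set g : (ℕ → X) → ℝ≥0∞ := (Aev E N).indicator 1 with hg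
        have hgm : Measurable g := (measurable_const).indicator (hAm N)
        have hmk := hmarkov y n (QS n) (measurableSet_comap_Q E hE n) g hgm
        have lhs_eq : ∫⁻ ω in QS n, g (fun k => ω (k + n)) ∂(P y)
            = P y (QS n ∩ Aev E (N + 1)) := by
          have hptw : ∀ ω : ℕ → X, g (fun k => ω (k + n))
              = ((fun ω : ℕ → X => fun k => ω (k + n)) ⁻¹' Aev E N).indicator 1 ω := by
            intro ω
            by_cases h : (fun k => ω (k + n)) ∈ Aev E N <;>
              simp [hg, Set.indicator, Set.mem_preimage, h]
          simp_rw [hptw]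
          rw [lintegral_indicator_one hpre, Measure.restrict_apply hpre,
            Set.inter_comm, hshift]
        have rhs_le : ∫⁻ ω in QS n, (∫⁻ ω', g ω' ∂(P (ω n))) ∂(P y)
            ≤ ENNReal.ofReal ((1 - ε) ^ N) * P y (QS n) := by
          have hb : ∀ᵐ ω ∂(P y).restrict (QS n),
              (∫⁻ ω', g ω' ∂(P (ω n))) ≤ ENNReal.ofReal ((1 - ε) ^ N) := by
            filter_upwards [ae_restrict_mem (hQm n)] with ω hω
            rw [hg, lintegral_indicator_one (hAm N)]
            exact ih (ω n) hω.1
          calc ∫⁻ ω in QS n, (∫⁻ ω', g ω' ∂(P (ω n))) ∂(P y)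
              ≤ ∫⁻ _ in QS n, ENNReal.ofReal ((1 - ε) ^ N) ∂(P y) := lintegral_mono_ae hb
            _ = ENNReal.ofReal ((1 - ε) ^ N) * P y (QS n) := setLIntegral_const _ _
        calc P y (QS n ∩ Aev E (N + 1)) = _ := lhs_eq.symm
          _ = _ := hmk
          _ ≤ _ := rhs_le
      have hUsub : (⋃ n, QS n) ⊆ Aev E 1 := by
        rintro ω hω
        obtain ⟨n, hn⟩ := Set.mem_iUnion.mp hω
        obtain ⟨_, t, _, hte, _, _⟩ := hn
        have : (exitSet E ω).Nonempty := ⟨t, hte⟩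
        rw [← Set.one_le_encard_iff_nonempty] at this
        exact_mod_cast this
      have hsum : ∑' n, P y (QS n ∩ Aev E (N + 1))
          ≤ ENNReal.ofReal ((1 - ε) ^ N) * (1 - ENNReal.ofReal ε) := by
        calc ∑' n, P y (QS n ∩ Aev E (N + 1))
            ≤ ∑' n, ENNReal.ofReal ((1 - ε) ^ N) * P y (QS n) := ENNReal.tsum_le_tsum step2
          _ = ENNReal.ofReal ((1 - ε) ^ N) * ∑' n, P y (QS n) := ENNReal.tsum_mul_left
          _ = ENNReal.ofReal ((1 - ε) ^ N) * P y (⋃ n, QS n) := by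
              rw [measure_iUnion (Q_disjoint E) hQm]
          _ ≤ ENNReal.ofReal ((1 - ε) ^ N) * P y (Aev E 1) :=
              mul_le_mul_right (measure_mono hUsub) _
          _ ≤ ENNReal.ofReal ((1 - ε) ^ N) * (1 - ENNReal.ofReal ε) :=
              mul_le_mul_right (hA1 y hy) _
      calc P y (Aev E (N + 1)) ≤ ∑' n, P y (QS n ∩ Aev E (N + 1)) := step1
        _ ≤ ENNReal.ofReal ((1 - ε) ^ N) * (1 - ENNReal.ofReal ε) := hsum
        _ = ENNReal.ofReal ((1 - ε) ^ (N + 1)) := by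
            rw [← ENNReal.ofReal_one, ← ENNReal.ofReal_sub 1 hε.le,
              ← ENNReal.ofReal_mul (pow_nonneg (by linarith) N), ← pow_succ]
  exact key N x hx
end
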